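/- The real function f(t) = ℓ(μ, B, t), viewing the log-likelihood as a function of the degrees of freedom with μ and B fixed, is differentiable at t = ν and its derivative equals (1/2)·ψ((ν+D)/2) − (1/2)·ψ(ν/2) − D/(2ν) − (1/2)·log(1 + q/ν) + (ν + D)·q/(2ν(ν + q)), where ψ(x) denotes the derivative at x of the function t ↦ log Γ(t) (the digamma function). -/

import Mathlib

open Matrix

/-- Multivariate t log-likelihood in the Cholesky precision parametrization `Ω = Bᵀ B`:
`ℓ(μ, B, ν) = log Γ((ν+D)/2) - log Γ(ν/2) - (D/2)·log ν - (D/2)·log π + log(det B)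
  - ((ν+D)/2)·log(1 + q/ν)` with `q = ‖B(y-μ)‖²`. -/
noncomputable def tCholLL (D : ℕ) (y μ : Fin D → ℝ)
    (B : Matrix (Fin D) (Fin D) ℝ) (ν : ℝ) : ℝ :=
  Real.log (Real.Gamma ((ν + D) / 2)) - Real.log (Real.Gamma (ν / 2))
    - ((D : ℝ) / 2) * Real.log ν - ((D : ℝ) / 2) * Real.log Real.pi
    + Real.log B.det
    - ((ν + D) / 2) * Real.log (1 + (∑ k, (B.mulVec (y - μ) k) ^ 2) / ν)

/-- The digamma function `ψ`, i.e. the derivative of `t ↦ log Γ(t)`. -/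
noncomputable def digamma (x : ℝ) : ℝ := deriv (fun t : ℝ => Real.log (Real.Gamma t)) x

lemma hasDerivAt_logGamma {x : ℝ} (hx : 0 < x) :
    HasDerivAt (fun t : ℝ => Real.log (Real.Gamma t)) (digamma x) x := by
  have hG : DifferentiableAt ℝ Real.Gamma x := by
    apply Real.differentiableAt_Gamma
    intro n
    have : (0 : ℝ) ≤ n := n.cast_nonneg
    nlinarith
  have hGx : Real.Gamma x ≠ 0 := (Real.Gamma_pos_of_pos hx).ne'
  have : DifferentiableAt ℝ (fun t : ℝ => Real.log (Real.Gamma t)) x :=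
    hG.log hGx
  simpa [digamma] using this.hasDerivAt

/-- Partial derivative of the multivariate t log-likelihood with respect to the degrees
of freedom `ν`: it equals
`(1/2)·ψ((ν+D)/2) - (1/2)·ψ(ν/2) - D/(2ν) - (1/2)·log(1 + q/ν) + (ν + D)·q/(2ν(ν + q))`
with `q = ‖B(y-μ)‖²`. -/
theorem tChol_deriv_nu (D : ℕ) (hD : 1 ≤ D) (y μ : Fin D → ℝ) (ν : ℝ) (hν : 0 < ν)
    (B : Matrix (Fin D) (Fin D) ℝ)
    (hLT : ∀ k l : Fin D, k < l → B k l = 0)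
    (hdiag : ∀ k, 0 < B k k) :
    HasDerivAt (fun t : ℝ => tCholLL D y μ B t)
      ((1 / 2) * digamma ((ν + D) / 2) - (1 / 2) * digamma (ν / 2)
        - (D : ℝ) / (2 * ν)
        - (1 / 2) * Real.log (1 + (∑ k, (B.mulVec (y - μ) k) ^ 2) / ν)
        + (ν + D) * (∑ k, (B.mulVec (y - μ) k) ^ 2) /
            (2 * ν * (ν + ∑ k, (B.mulVec (y - μ) k) ^ 2)))
      ν := by
  set q : ℝ := ∑ k, (B.mulVec (y - μ) k) ^ 2 with hq_def
  have hq : 0 ≤ q := Finset.sum_nonneg fun k _ => sq_nonneg _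
  have hν' : ν ≠ 0 := hν.ne'
  have hpos1 : 0 < (ν + D) / 2 := by positivity
  have hpos2 : 0 < ν / 2 := by positivity
  have hinner1 : HasDerivAt (fun t : ℝ => (t + (D : ℝ)) / 2) (1 / 2) ν := by
    simpa using ((hasDerivAt_id ν).add_const (D : ℝ)).div_const 2
  have hinner2 : HasDerivAt (fun t : ℝ => t / 2) (1 / 2) ν := by
    simpa using (hasDerivAt_id ν).div_const 2
  have h1 : HasDerivAt (fun t : ℝ => Real.log (Real.Gamma ((t + D) / 2)))
      (digamma ((ν + D) / 2) * (1 / 2)) ν :=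
    by have := (hasDerivAt_logGamma hpos1).comp ν hinner1; exact this
  have h2 : HasDerivAt (fun t : ℝ => Real.log (Real.Gamma (t / 2)))
      (digamma (ν / 2) * (1 / 2)) ν :=
    by have := (hasDerivAt_logGamma hpos2).comp ν hinner2; exact this
  have h3 : HasDerivAt (fun t : ℝ => ((D : ℝ) / 2) * Real.log t)
      (((D : ℝ) / 2) * ν⁻¹) ν :=
    (Real.hasDerivAt_log hν').const_mul _
  have hqt : HasDerivAt (fun t : ℝ => 1 + q / t) (q * (-(ν ^ 2)⁻¹)) ν := by
    have : HasDerivAt (fun t : ℝ => q * t⁻¹) (q * (-(ν ^ 2)⁻¹)) ν :=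
      (hasDerivAt_inv hν').const_mul q
    simpa [div_eq_mul_inv] using this.const_add 1
  have hΦpos : 0 < 1 + q / ν := by positivity
  have h5log : HasDerivAt (fun t : ℝ => Real.log (1 + q / t))
      ((q * (-(ν ^ 2)⁻¹)) / (1 + q / ν)) ν := hqt.log hΦpos.ne'
  have h5 : HasDerivAt (fun t : ℝ => ((t + D) / 2) * Real.log (1 + q / t))
      ((1 / 2) * Real.log (1 + q / ν)
        + ((ν + D) / 2) * ((q * (-(ν ^ 2)⁻¹)) / (1 + q / ν))) ν :=
    hinner1.mul h5log
  have htot := (((((h1.sub h2).sub h3).sub_const (((D : ℝ) / 2) * Real.log Real.pi)).add_const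
      (Real.log B.det)).sub h5)
  have heq : (fun t : ℝ => tCholLL D y μ B t) =
      fun t : ℝ => Real.log (Real.Gamma ((t + D) / 2)) - Real.log (Real.Gamma (t / 2))
        - ((D : ℝ) / 2) * Real.log t - ((D : ℝ) / 2) * Real.log Real.pi
        + Real.log B.det - ((t + D) / 2) * Real.log (1 + q / t) := by
    funext t
    simp [tCholLL, hq_def]
  rw [heq]
  refine htot.congr_deriv ?_
  have hνq : ν + q ≠ 0 := by positivity
  have hΦ : 1 + q / ν ≠ 0 := hΦpos.ne'
  field_simp
  ring
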